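/- Let (w_n) be a non-increasing sequence in (0,1] and define w^n_k = w_k · ∏_{i=k+1}^n (1 − w_i) for 1 ≤ k ≤ n. If w_n ≥ c·n^{−γ} for all n ≥ 1 with constants c > 0 and γ ∈ (0,1), then for any fixed T ∈ ℕ and all n ≥ T, ∑_{i=1}^T w^n_i ≤ T·exp(−c·n^{1−γ} + c·(T+1)^{1−γ}). -/

import Mathlib

open Finset

lemma bern_aux {γ : ℝ} (hγ : γ ∈ Set.Ioo (0:ℝ) 1) (j : ℕ) (hj : 1 ≤ j) :
    ((j:ℝ)+1) ^ (1-γ) ≤ (j:ℝ) ^ (1-γ) + (1-γ) * (j:ℝ) ^ (-γ) := by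
  have hx : (1:ℝ) ≤ (j:ℝ) := by exact_mod_cast hj
  have hx0 : (0:ℝ) < (j:ℝ) := by linarith
  have hp1 : (0:ℝ) ≤ 1 - γ := by linarith [hγ.2]
  have hp2 : (1:ℝ) - γ ≤ 1 := by linarith [hγ.1]
  have h1 : ((j:ℝ)+1) = (j:ℝ) * (1 + 1/(j:ℝ)) := by field_simp
  have h2 : ((j:ℝ) * (1 + 1/(j:ℝ))) ^ (1-γ)
      = (j:ℝ) ^ (1-γ) * (1 + 1/(j:ℝ)) ^ (1-γ) := by
    rw [Real.mul_rpow hx0.le (by positivity)]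
  have hs : (-1:ℝ) ≤ 1/(j:ℝ) := by
    have h : (0:ℝ) < 1/(j:ℝ) := by positivity
    linarith
  have h3 : (1 + 1/(j:ℝ)) ^ (1-γ) ≤ 1 + (1-γ) * (1/(j:ℝ)) :=
    rpow_one_add_le_one_add_mul_self hs hp1 hp2
  have h4 : (j:ℝ) ^ (1-γ) * (1/(j:ℝ)) = (j:ℝ) ^ (-γ) := by
    rw [one_div, ← Real.rpow_neg_one (j:ℝ), ← Real.rpow_add hx0]
    congr 1; ring
  calc ((j:ℝ)+1) ^ (1-γ) = (j:ℝ) ^ (1-γ) * (1 + 1/(j:ℝ)) ^ (1-γ) := by rw [h1, h2]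
    _ ≤ (j:ℝ) ^ (1-γ) * (1 + (1-γ) * (1/(j:ℝ))) := by
        apply mul_le_mul_of_nonneg_left h3 (by positivity)
    _ = (j:ℝ) ^ (1-γ) + (1-γ) * ((j:ℝ) ^ (1-γ) * (1/(j:ℝ))) := by ring
    _ = (j:ℝ) ^ (1-γ) + (1-γ) * (j:ℝ) ^ (-γ) := by rw [h4]

lemma sum_low {γ : ℝ} (hγ : γ ∈ Set.Ioo (0:ℝ) 1) (T : ℕ) (hT : 1 ≤ T) :
    ∀ n : ℕ, T ≤ n →
      ((n:ℝ)+1) ^ (1-γ) - ((T:ℝ)+1) ^ (1-γ) ≤ (1-γ) * ∑ j ∈ Icc (T+1) n, (j:ℝ) ^ (-γ) := by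
  intro n hn
  induction n, hn using Nat.le_induction with
  | base => simp
  | succ n hn ih =>
    rw [Finset.sum_Icc_succ_top (by omega : T+1 ≤ n+1)]
    have hb := bern_aux hγ (n+1) (by omega)
    push_cast at hb ⊢
    nlinarith [hb, ih]

/-- If `(w n)` is non-increasing in `(0,1]` with `w n ≥ c n^{-γ}` for `γ ∈ (0,1)`, then
for fixed `T ≥ 1` and all `n ≥ T`,
`∑_{i=1}^T w^n_i ≤ T exp(-c n^{1-γ} + c (T+1)^{1-γ})` where
`w^n_k = w k ∏_{i=k+1}^n (1 - w i)`. -/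
theorem stmt7 (w : ℕ → ℝ) (hmono : ∀ m n : ℕ, m ≤ n → w n ≤ w m)
    (hw : ∀ n : ℕ, 1 ≤ n → w n ∈ Set.Ioc (0 : ℝ) 1)
    (c γ : ℝ) (hc : 0 < c) (hγ : γ ∈ Set.Ioo (0 : ℝ) 1)
    (hlow : ∀ n : ℕ, 1 ≤ n → c * (n : ℝ) ^ (-γ) ≤ w n)
    (T : ℕ) (hT : 1 ≤ T) :
    ∀ n : ℕ, T ≤ n →
      ∑ i ∈ Finset.Icc 1 T, (w i * ∏ j ∈ Finset.Icc (i + 1) n, (1 - w j))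
        ≤ (T : ℝ) * Real.exp (-c * (n : ℝ) ^ (1 - γ) + c * ((T : ℝ) + 1) ^ (1 - γ)) := by
  intro n hn
  set E := Real.exp (-c * (n : ℝ) ^ (1 - γ) + c * ((T : ℝ) + 1) ^ (1 - γ)) with hE
  have hfac : ∀ j : ℕ, 1 ≤ j → 0 ≤ 1 - w j ∧ 1 - w j ≤ 1 := by
    intro j hj
    have := hw j hj
    constructor <;> [linarith [this.2]; linarith [this.1]]
  -- key bound on the tail product
  have htail : ∏ j ∈ Icc (T+1) n, (1 - w j) ≤ E := by
    have h1 : ∏ j ∈ Icc (T+1) n, (1 - w j) ≤ ∏ j ∈ Icc (T+1) n, Real.exp (-w j) := by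
      apply Finset.prod_le_prod
      · intro j hj
        exact (hfac j (by have := (Finset.mem_Icc.mp hj).1; omega)).1
      · intro j hj
        have := Real.add_one_le_exp (-w j)
        linarith
    have h2 : ∏ j ∈ Icc (T+1) n, Real.exp (-w j)
        = Real.exp (-∑ j ∈ Icc (T+1) n, w j) := by
      rw [← Real.exp_sum]; simp
    have h3 : c * ((n:ℝ) ^ (1-γ) - ((T:ℝ)+1) ^ (1-γ)) ≤ ∑ j ∈ Icc (T+1) n, w j := by
      have hS0 : 0 ≤ ∑ j ∈ Icc (T+1) n, (j:ℝ) ^ (-γ) := by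
        apply Finset.sum_nonneg; intro j hj; positivity
      have hSlow := sum_low hγ T hT n hn
      have hmono1 : (n:ℝ) ^ (1-γ) ≤ ((n:ℝ)+1) ^ (1-γ) :=
        Real.rpow_le_rpow (Nat.cast_nonneg n) (by linarith) (by linarith [hγ.2])
      have hshrink : (1-γ) * ∑ j ∈ Icc (T+1) n, (j:ℝ) ^ (-γ)
          ≤ ∑ j ∈ Icc (T+1) n, (j:ℝ) ^ (-γ) := by
        nlinarith [hγ.1]
      have hsum : c * ∑ j ∈ Icc (T+1) n, (j:ℝ) ^ (-γ) ≤ ∑ j ∈ Icc (T+1) n, w j := by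
        rw [Finset.mul_sum]
        apply Finset.sum_le_sum
        intro j hj
        exact hlow j (by have := (Finset.mem_Icc.mp hj).1; omega)
      nlinarith
    calc ∏ j ∈ Icc (T+1) n, (1 - w j)
        ≤ Real.exp (-∑ j ∈ Icc (T+1) n, w j) := h2 ▸ h1
      _ ≤ E := by
          rw [hE]; apply Real.exp_le_exp.mpr; linarith
  have hterm : ∀ i ∈ Icc 1 T, w i * ∏ j ∈ Icc (i+1) n, (1 - w j) ≤ E := by
    intro i hi
    obtain ⟨hi1, hiT⟩ := Finset.mem_Icc.mp hi
    have hsplit : ∏ j ∈ Icc (i+1) n, (1 - w j)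
        = (∏ j ∈ Icc (i+1) T, (1 - w j)) * ∏ j ∈ Icc (T+1) n, (1 - w j) := by
      rw [Finset.Icc_add_one_left_eq_Ioc, Finset.Icc_add_one_left_eq_Ioc, Finset.Icc_add_one_left_eq_Ioc,
        ← Finset.prod_Ioc_consecutive _ hiT hn]
    have hmid : ∏ j ∈ Icc (i+1) T, (1 - w j) ≤ 1 := by
      apply Finset.prod_le_one
      · intro j hj; exact (hfac j (by have := (Finset.mem_Icc.mp hj).1; omega)).1
      · intro j hj; exact (hfac j (by have := (Finset.mem_Icc.mp hj).1; omega)).2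
    have hmid0 : 0 ≤ ∏ j ∈ Icc (i+1) T, (1 - w j) := by
      apply Finset.prod_nonneg
      intro j hj; exact (hfac j (by have := (Finset.mem_Icc.mp hj).1; omega)).1
    have htail0 : 0 ≤ ∏ j ∈ Icc (T+1) n, (1 - w j) := by
      apply Finset.prod_nonneg
      intro j hj; exact (hfac j (by have := (Finset.mem_Icc.mp hj).1; omega)).1
    have hwi := hw i hi1
    calc w i * ∏ j ∈ Icc (i+1) n, (1 - w j)
        ≤ 1 * ∏ j ∈ Icc (i+1) n, (1 - w j) := by
          apply mul_le_mul_of_nonneg_right hwi.2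
          rw [hsplit]; positivity
      _ = (∏ j ∈ Icc (i+1) T, (1 - w j)) * ∏ j ∈ Icc (T+1) n, (1 - w j) := by
          rw [one_mul, hsplit]
      _ ≤ 1 * ∏ j ∈ Icc (T+1) n, (1 - w j) :=
          mul_le_mul_of_nonneg_right hmid htail0
      _ = ∏ j ∈ Icc (T+1) n, (1 - w j) := one_mul _
      _ ≤ E := htail
  calc ∑ i ∈ Icc 1 T, (w i * ∏ j ∈ Icc (i+1) n, (1 - w j))
      ≤ ∑ _i ∈ Icc 1 T, E := Finset.sum_le_sum hterm
    _ = (T : ℝ) * E := by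
        rw [Finset.sum_const, Nat.card_Icc, Nat.add_sub_cancel, nsmul_eq_mul]
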